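/- Let A be a nonzero purely imaginary quaternion and B ∈ ℍ with ‖B‖ = 1. Define γ = (α, β) : [0, ∞) → ℍ × Im ℍ by α(λ) = −A⁻¹ · (1 − exp(λ A)) · B and β(λ) = −(2/‖A‖³) · (‖A‖λ − sin(‖A‖λ)) · A. Then γ(0) = (0,0), γ is horizontal, ‖α′(λ)‖ = 1 for every λ ≥ 0, and consequently d_cc((0,0), γ(λ)) ≤ λ for every λ ≥ 0. -/

import Mathlib

open Quaternion Set

/-- The horizontality condition at a point of differentiability:
`β′(l) = −2 Im(α′(l) · conj(α(l)))`. -/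
def HorizontalAt (α β : ℝ → ℍ[ℝ]) (l : ℝ) : Prop :=
  ∃ a' b' : ℍ[ℝ], HasDerivAt α a' l ∧ HasDerivAt β b' l ∧
    b' = (-2 : ℝ) • Quaternion.im (a' * star (α l))

/-- A piecewise-C¹ horizontal curve `(α, β) : [a, b] → ℍ × Im ℍ`: it is continuous,
takes vertical values in the imaginary quaternions, and away from a finite set of
points it is differentiable with continuous derivative and satisfies the
horizontality condition. -/
def IsPiecewiseHorizontal (α β : ℝ → ℍ[ℝ]) (a b : ℝ) : Prop :=
  ContinuousOn (fun l => (α l, β l)) (Icc a b) ∧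
  (∀ l ∈ Icc a b, (β l).re = 0) ∧
  ∃ F : Finset ℝ,
    (∀ l ∈ Icc a b, l ∉ F → HorizontalAt α β l) ∧
    ContinuousOn (fun l => deriv α l) (Icc a b \ F)

/-- The horizontal length of a curve: the integral of the norm of the derivative
of the horizontal projection. -/
noncomputable def hLength (α : ℝ → ℍ[ℝ]) (a b : ℝ) : ℝ :=
  ∫ l in a..b, ‖deriv α l‖

/-- The Carnot–Carathéodory distance on the quaternionic Heisenberg group:
the infimum of horizontal lengths of piecewise-C¹ horizontal curves joining the
two points. -/
noncomputable def ccDist (P P' : ℍ[ℝ] × ℍ[ℝ]) : ℝ :=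
  sInf {L : ℝ | ∃ (a b : ℝ) (α β : ℝ → ℍ[ℝ]), a ≤ b ∧
    IsPiecewiseHorizontal α β a b ∧ (α a, β a) = P ∧ (α b, β b) = P' ∧
    L = hLength α a b}

section Aux
variable {A B : ℍ[ℝ]}

lemma starA (him : A.re = 0) : star A = -A := by
  ext <;> simp [him]

lemma AmulA (him : A.re = 0) : A * A = ((-(‖A‖^2) : ℝ) : ℍ[ℝ]) := by
  have h1 : star A * A = ((normSq A : ℝ) : ℍ[ℝ]) := Quaternion.star_mul_self A
  rw [starA him, neg_mul] at h1
  have h2 : normSq A = ‖A‖^2 := by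
    rw [Quaternion.normSq_eq_norm_mul_self]; ring
  rw [h2] at h1
  rw [neg_eq_iff_eq_neg.mp h1]
  push_cast
  ring

lemma mulAA (him : A.re = 0) (r t r' t' : ℝ) :
    (((r : ℝ) : ℍ[ℝ]) + t • A) * (((r' : ℝ) : ℍ[ℝ]) + t' • A)
      = (((r * r' - t * t' * ‖A‖^2 : ℝ)) : ℍ[ℝ]) + (r * t' + t * r') • A := by
  rw [add_mul, mul_add, mul_add, smul_mul_assoc, smul_mul_assoc, mul_smul_comm, mul_smul_comm,
    AmulA him, Quaternion.coe_mul_eq_smul, Quaternion.coe_mul_eq_smul, smul_smul]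
  push_cast
  rw [Quaternion.coe_mul_eq_smul]
  ext <;> simp <;> ring

lemma invA (hA : A ≠ 0) (him : A.re = 0) : A⁻¹ = (-(‖A‖^2)⁻¹) • A := by
  refine inv_eq_of_mul_eq_one_right ?_
  rw [mul_smul_comm, AmulA him, Quaternion.smul_coe]
  have h3 : (-(‖A‖^2)⁻¹) * (-(‖A‖^2)) = 1 := by
    have : (‖A‖:ℝ)^2 ≠ 0 := pow_ne_zero _ (norm_ne_zero_iff.mpr hA)
    field_simp
  rw [h3, Quaternion.coe_one]

lemma expA (him : A.re = 0) (l : ℝ) :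
    NormedSpace.exp (l • A) =
      ((Real.cos (‖A‖ * l) : ℝ) : ℍ[ℝ]) + (Real.sin (‖A‖ * l) / ‖A‖) • A := by
  rcases eq_or_ne A 0 with rfl | hA
  · simp
  have hre : (l • A).re = 0 := by simp [him]
  rw [Quaternion.exp_of_re_eq_zero _ hre]
  have hn : ‖l • A‖ = |l| * ‖A‖ := by rw [norm_smul, Real.norm_eq_abs]
  have hθ : (0:ℝ) < ‖A‖ := norm_pos_iff.mpr hA
  rcases lt_trichotomy l 0 with hl | rfl | hl
  · rw [hn, abs_of_neg hl]
    have : Real.cos (-l * ‖A‖) = Real.cos (‖A‖ * l) := by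
      rw [← Real.cos_neg (‖A‖ * l)]; ring_nf
    rw [this, smul_smul]
    congr 2
    have : Real.sin (-l * ‖A‖) = - Real.sin (‖A‖ * l) := by
      rw [← Real.sin_neg (‖A‖ * l)]; ring_nf
    rw [this]
    have h1 : l ≠ 0 := hl.ne
    have h2 : ‖A‖ ≠ 0 := hθ.ne'
    field_simp
  · simp
  · rw [hn, abs_of_pos hl, smul_smul]
    have : Real.cos (l * ‖A‖) = Real.cos (‖A‖ * l) := by ring_nf
    rw [this]
    congr 2
    have : Real.sin (l * ‖A‖) = Real.sin (‖A‖ * l) := by ring_nf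
    rw [this]
    field_simp

lemma expA_commute (l : ℝ) :
    NormedSpace.exp (l • A) * A = A * NormedSpace.exp (l • A) :=
  (((Commute.refl A).smul_left l).exp_left).eq

lemma hasDerivAt_alpha (hA : A ≠ 0) (B : ℍ[ℝ]) (l : ℝ) :
    HasDerivAt (fun l => -(A⁻¹ * ((1 - NormedSpace.exp (l • A)) * B)))
      (NormedSpace.exp (l • A) * B) l := by
  have hu := hasDerivAt_exp_smul_const (𝕂 := ℝ) A l
  have h := ((((hasDerivAt_const l (1:ℍ[ℝ])).sub hu).mul_const B).const_mul A⁻¹).neg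
  refine h.congr_deriv ?_
  rw [zero_sub, neg_mul, mul_neg, neg_neg, expA_commute, mul_assoc A _ B,
    ← mul_assoc A⁻¹ A _, inv_mul_cancel₀ hA, one_mul]

lemma prod_eq (hA : A ≠ 0) (him : A.re = 0) (hB : ‖B‖ = 1) (l : ℝ) :
    (NormedSpace.exp (l • A) * B) * star (-(A⁻¹ * ((1 - NormedSpace.exp (l • A)) * B)))
      = ((Real.sin (‖A‖ * l) / ‖A‖ : ℝ) : ℍ[ℝ]) + ((1 - Real.cos (‖A‖ * l)) / ‖A‖^2) • A := by
  have hθ : ‖A‖ ≠ 0 := norm_ne_zero_iff.mpr hA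
  have hBB : B * star B = 1 := by
    rw [Quaternion.self_mul_star, Quaternion.normSq_eq_norm_mul_self, hB]
    norm_num
  set u := NormedSpace.exp (l • A) with hu
  rw [star_neg, star_mul, star_mul, mul_neg]
  have step : (u * B) * ((star B * star ((1:ℍ[ℝ]) - u)) * star A⁻¹)
      = (u * (B * star B)) * (star ((1:ℍ[ℝ]) - u) * star A⁻¹) := by
    noncomm_ring
  rw [step, hBB, mul_one]
  have h1 : star ((1:ℍ[ℝ]) - u) =
      ((1 - Real.cos (‖A‖ * l) : ℝ) : ℍ[ℝ]) + (Real.sin (‖A‖ * l) / ‖A‖) • A := by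
    rw [hu, expA him l]
    ext <;> simp [him]
  have h2 : star (A⁻¹) = ((0:ℝ) : ℍ[ℝ]) + ((‖A‖^2)⁻¹) • A := by
    rw [invA hA him]
    ext <;> simp [him]
  rw [h1, h2, hu, expA him l, mulAA him, mulAA him]
  have hsc : Real.sin (‖A‖*l) ^ 2 + Real.cos (‖A‖*l) ^ 2 = 1 := Real.sin_sq_add_cos_sq _
  rw [neg_add, ← Quaternion.coe_neg, ← neg_smul]
  congr 1
  · exact congrArg (Quaternion.coe) (by field_simp; ring)
  · congr 1
    field_simp
    linear_combination hsc

lemma im_coe_add_smul (him : A.re = 0) (x t : ℝ) :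
    (((x : ℝ) : ℍ[ℝ]) + t • A).im = t • A := by
  ext <;> simp [him]

end Aux

/-- The curves `α(λ) = −A⁻¹(1 − exp(λA))B`, `β(λ) = −(2/‖A‖³)(‖A‖λ − sin(‖A‖λ))A`
(for `A` a nonzero purely imaginary quaternion and `B` a unit quaternion) start at
the origin, are horizontal and of unit horizontal speed; consequently
`d_cc((0,0), γ(λ)) ≤ λ` for every `λ ≥ 0`. -/
theorem cc_geodesic_properties
    (A B : ℍ[ℝ]) (hA : A ≠ 0) (him : A.re = 0) (hB : ‖B‖ = 1)
    (α β : ℝ → ℍ[ℝ])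
    (hα : α = fun l => -(A⁻¹ * ((1 - NormedSpace.exp (l • A)) * B)))
    (hβ : β = fun l => -(2 / ‖A‖ ^ 3 * (‖A‖ * l - Real.sin (‖A‖ * l))) • A) :
    α 0 = 0 ∧ β 0 = 0 ∧
    (∀ l : ℝ, 0 ≤ l →
      (∃ a' b' : ℍ[ℝ], HasDerivAt α a' l ∧ HasDerivAt β b' l ∧
        b' = (-2 : ℝ) • Quaternion.im (a' * star (α l)) ∧ ‖a'‖ = 1) ∧
      (β l).re = 0 ∧
      ccDist (0, 0) (α l, β l) ≤ l) := by
  subst hα hβ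
  set αf : ℝ → ℍ[ℝ] := fun l => -(A⁻¹ * ((1 - NormedSpace.exp (l • A)) * B)) with hαf
  set βf : ℝ → ℍ[ℝ] := fun l => -(2 / ‖A‖ ^ 3 * (‖A‖ * l - Real.sin (‖A‖ * l))) • A with hβf
  have hθ : ‖A‖ ≠ 0 := norm_ne_zero_iff.mpr hA
  have hα0 : αf 0 = 0 := by simp [hαf]
  have hβ0 : βf 0 = 0 := by simp [hβf]
  -- derivative of αf
  have hasα : ∀ t : ℝ, HasDerivAt αf (NormedSpace.exp (t • A) * B) t :=
    fun t => hasDerivAt_alpha hA B t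
  -- derivative of βf
  have hasβ : ∀ t : ℝ, HasDerivAt βf
      (-(2 / ‖A‖ ^ 3 * (‖A‖ - Real.cos (‖A‖ * t) * ‖A‖)) • A) t := by
    intro t
    have hid : HasDerivAt (fun x : ℝ => ‖A‖ * x) ‖A‖ t := by
      simpa using (hasDerivAt_id t).const_mul ‖A‖
    have hsin : HasDerivAt (fun x : ℝ => Real.sin (‖A‖ * x)) (Real.cos (‖A‖ * t) * ‖A‖) t :=
      (Real.hasDerivAt_sin (‖A‖ * t)).comp t hid
    exact (((hid.sub hsin).const_mul (2 / ‖A‖ ^ 3)).neg).smul_const A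
  -- unit speed
  have hnorm : ∀ t : ℝ, ‖NormedSpace.exp (t • A) * B‖ = 1 := by
    intro t
    rw [norm_mul, hB, mul_one, Quaternion.norm_exp]
    simp [him]
  -- horizontality with norm
  have hhoriz : ∀ t : ℝ,
      ∃ a' b' : ℍ[ℝ], HasDerivAt αf a' t ∧ HasDerivAt βf b' t ∧
        b' = (-2 : ℝ) • Quaternion.im (a' * star (αf t)) ∧ ‖a'‖ = 1 := by
    intro t
    refine ⟨_, _, hasα t, hasβ t, ?_, hnorm t⟩
    have hp : (NormedSpace.exp (t • A) * B) * star (αf t)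
        = ((Real.sin (‖A‖ * t) / ‖A‖ : ℝ) : ℍ[ℝ]) +
          ((1 - Real.cos (‖A‖ * t)) / ‖A‖ ^ 2) • A := prod_eq hA him hB t
    rw [hp, im_coe_add_smul him, smul_smul]
    congr 1
    field_simp
  -- the vertical component is imaginary
  have hre : ∀ t : ℝ, (βf t).re = 0 := by
    intro t
    simp [hβf, him]
  -- continuity facts
  have cexp : Continuous fun t : ℝ => NormedSpace.exp (t • A) :=
    (continuous_iff_continuousAt.2 fun x => (NormedSpace.exp_analytic (𝕂 := ℝ) x).continuousAt).comp (continuous_id.smul continuous_const)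
  have cα : Continuous αf := by
    rw [hαf]
    exact (continuous_const.mul ((continuous_const.sub cexp).mul continuous_const)).neg
  have cβ : Continuous βf := by
    rw [hβf]
    refine Continuous.smul (f := fun l : ℝ => -(2 / ‖A‖ ^ 3 * (‖A‖ * l - Real.sin (‖A‖ * l)))) (g := fun _ : ℝ => A) ?_ continuous_const
    fun_prop
  have hderiv : deriv αf = fun t => NormedSpace.exp (t • A) * B :=
    funext fun t => (hasα t).deriv
  refine ⟨hα0, hβ0, fun l hl => ⟨hhoriz l, hre l, ?_⟩⟩
  -- the cc-distance bound
  have hPH : IsPiecewiseHorizontal αf βf 0 l := by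
    refine ⟨(cα.prodMk cβ).continuousOn, fun t _ => hre t, ∅, ?_, ?_⟩
    · intro t _ _
      obtain ⟨a', b', h1, h2, h3, _⟩ := hhoriz t
      exact ⟨a', b', h1, h2, h3⟩
    · rw [hderiv]
      exact (cexp.mul continuous_const).continuousOn
  have hlen : l = hLength αf 0 l := by
    unfold hLength
    rw [hderiv]
    have : (∫ t in (0:ℝ)..l, ‖NormedSpace.exp (t • A) * B‖) = ∫ t in (0:ℝ)..l, (1:ℝ) := by
      apply intervalIntegral.integral_congr
      intro t _
      exact hnorm t
    rw [this]
    simp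
  apply csInf_le
  · refine ⟨0, fun L hL => ?_⟩
    obtain ⟨a, b, α', β', hab, _, _, _, hLe⟩ := hL
    rw [hLe]
    unfold hLength
    exact intervalIntegral.integral_nonneg hab fun u _ => norm_nonneg _
  · exact ⟨0, l, αf, βf, hl, hPH, by rw [hα0, hβ0], rfl, hlen⟩
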